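/- Let P be a distribution on [n] and let the domain be partitioned into a set H of singleton points and a set L of disjoint intervals, each interval in L having total P-mass less than ε/(2k). Let f' be the histogram that equals pᵢ exactly on each i ∈ H and equals the median of the nonzero masses within each interval of L. Then for any k-piece histogram f*, err_P(f') ≤ err_P(f*) + ε/2, where err_P(g) = ∑_{i ∈ supp(P)} |pᵢ - g(i)|. -/

import Mathlib

/-- The median of a multiset of reals: the element at position `⌈card/2⌉`
(upper median) of the sorted list. -/
noncomputable def msMedian (s : Multiset ℝ) : ℝ :=
  (s.sort (· ≤ ·)).getD (Multiset.card s / 2) 0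

/-- The support-aware L1 error of approximating the distribution `p` on `[n]`
by the function `g`. -/
noncomputable def errP (n : ℕ) (p g : ℕ → ℝ) : ℝ :=
  ∑ i ∈ (Finset.Icc 1 n).filter fun i => p i ≠ 0, |p i - g i|

/-- `f` is a `k`-piece histogram on `[n]`: it is piecewise constant with at most
`k` contiguous pieces. -/
def IsKHistogram (n k : ℕ) (f : ℕ → ℝ) : Prop :=
  ((Finset.Icc 2 n).filter fun i => f i ≠ f (i - 1)).card + 1 ≤ k

lemma list_median_min : ∀ (m : ℕ) (l : List ℝ), l.length = m → l.Pairwise (· ≤ ·) → ∀ c : ℝ,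
    (l.map (fun x => |x - l.getD (l.length / 2) 0|)).sum ≤ (l.map (fun x => |x - c|)).sum := by
  intro m
  induction m using Nat.strong_induction_on with
  | _ m IH =>
    intro l hlen hsort c
    match l with
    | [] => simp
    | [a] => simp
    | (a :: x :: rest) =>
      obtain ⟨l'', b, hxb⟩ : ∃ l'' b, x :: rest = l'' ++ [b] := by
        rcases (x :: rest).eq_nil_or_concat with h | ⟨L', b, h⟩
        · simp at h
        · exact ⟨L', b, by simpa using h⟩
      subst hlen
      rw [hxb] at hsort ⊢
      set l : List ℝ := a :: (l'' ++ [b]) with hl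
      have hlen : l.length = l''.length + 2 := by simp [hl]
      set N := l.length with hN
      -- bounds on the median index
      have h1 : 1 ≤ N / 2 := by omega
      have h2 : N / 2 ≤ N - 1 := by omega
      set med : ℝ := l.getD (N / 2) 0 with hmed
      have hmedmem : med ∈ l := by
        rw [hmed, List.getD_eq_getElem?_getD, List.getElem?_eq_getElem (by omega)]
        exact List.getElem_mem _
      -- sorted facts
      have hhead : ∀ y ∈ l'' ++ [b], a ≤ y := fun y hy => (List.pairwise_cons.mp hsort).1 y hy
      have htail : List.Pairwise (· ≤ ·) (l'' ++ [b]) := (List.pairwise_cons.mp hsort).2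
      have hlast : ∀ y ∈ l'', y ≤ b := by
        intro y hy
        have := (List.pairwise_append.mp htail).2.2 y hy b (by simp)
        exact this
      have hab : a ≤ b := hhead b (by simp)
      have hup : ∀ y ∈ l, y ≤ b := by
        intro y hy
        rcases List.mem_cons.mp hy with rfl | hy
        · exact hab
        · rcases List.mem_append.mp hy with h | h
          · exact hlast y h
          · simp at h; exact le_of_eq h
      have ham : a ≤ med := by
        rcases List.mem_cons.mp hmedmem with h | h
        · exact le_of_eq h.symm
        · exact hhead _ h
      have hmb : med ≤ b := hup _ hmedmem
      -- sum decomposition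
      have hdecomp : ∀ g : ℝ → ℝ, (l.map g).sum = g a + (l''.map g).sum + g b := by
        intro g
        simp [hl, List.map_append]
        ring
      rw [hdecomp, hdecomp]
      have hends : |a - med| + |b - med| = b - a := by
        rw [abs_of_nonpos (by linarith), abs_of_nonneg (by linarith)]; ring
      have hendc : b - a ≤ |a - c| + |b - c| := by
        have := abs_sub_abs_le_abs_sub a b
        have h1 := abs_sub (a) (c)
        have : |b - a| ≤ |b - c| + |c - a| := abs_sub_le b c a
        have hba : |b - a| = b - a := abs_of_nonneg (by linarith)
        have : b - a ≤ |b - c| + |c - a| := by rw [← hba]; exact abs_sub_le b c a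
        rw [abs_sub_comm c a] at this
        linarith
      have hmid : (l''.map (fun x => |x - med|)).sum ≤ (l''.map (fun x => |x - c|)).sum := by
        rcases List.eq_nil_or_concat l'' with h | _
        · subst h; simp
        have hl''len : l''.length < N := by omega
        have hsort'' : l''.Pairwise (· ≤ ·) := ((List.pairwise_append.mp htail).1)
        have hmedeq : med = l''.getD (l''.length / 2) 0 := by
          rw [hmed]
          have hlpos : 0 < l''.length := by
            cases l'' with
            | nil => simp_all
            | cons _ _ => simp
          have hidx : N / 2 - 1 < l''.length := by omega
          have hj : N / 2 = (N / 2 - 1) + 1 := by omega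
          have e1 : med = (l'' ++ [b]).getD (N / 2 - 1) 0 := by
            rw [hmed, hl, hj]; rfl
          have e2 : (l'' ++ [b]).getD (N / 2 - 1) 0 = l''.getD (N / 2 - 1) 0 :=
            List.getD_append _ _ _ _ hidx
          have e3 : l''.length / 2 = N / 2 - 1 := by omega
          rw [e3, ← e2, ← e1, hmed]
        have hNr : (a :: x :: rest).length = N := by rw [hN, hl, hxb]
        rw [hmedeq]
        exact IH l''.length (by omega) l'' rfl hsort'' c
      linarith

lemma msMedian0 (s : Multiset ℝ) : msMedian s = (s.sort (· ≤ ·)).getD (Multiset.card s / 2) 0 := rfl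

lemma msMedian_min (s : Multiset ℝ) (c : ℝ) :
    (s.map (fun x => |x - msMedian s|)).sum ≤ (s.map (fun x => |x - c|)).sum := by
  set l := s.sort (· ≤ ·) with hldef
  have hs : (l : Multiset ℝ) = s := Multiset.sort_eq _ _
  have hlen : l.length = Multiset.card s := Multiset.length_sort _
  have key := list_median_min l.length l rfl (Multiset.pairwise_sort _ _) c
  rw [hlen] at key
  have hmed : msMedian s = l.getD (Multiset.card s / 2) 0 := rfl
  have hmsum : ∀ g : ℝ → ℝ, (s.map g).sum = (List.map g l).sum := by
    intro g; rw [← hs]; rfl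
  rw [hmsum, hmsum, hmed]
  exact key

lemma finset_median_min (S : Finset ℕ) (p : ℕ → ℝ) (c : ℝ) :
    ∑ i ∈ S, |p i - msMedian (S.val.map p)| ≤ ∑ i ∈ S, |p i - c| := by
  have h := msMedian_min (S.val.map p) c
  rw [Multiset.map_map, Multiset.map_map] at h
  exact h

lemma const_on (f : ℕ → ℝ) (a b : ℕ)
    (hnb : ∀ j ∈ Finset.Icc (a+1) b, f j = f (j-1)) :
    ∀ i, a ≤ i → i ≤ b → f i = f a := by
  intro i hai
  induction i, hai using Nat.le_induction with
  | base => intro _; rfl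
  | succ m hm IH =>
    intro hb
    have h1 : f (m+1) = f m := by
      have := hnb (m+1) (Finset.mem_Icc.mpr ⟨by omega, hb⟩)
      simpa using this
    rw [h1]; exact IH (by omega)

/-- Two-pass correctness core: if `[n]` is partitioned into singletons `H` and
disjoint intervals `L` each of P-mass less than `ε/(2k)`, and `f'` equals `pᵢ`
on `H` and the median of the nonzero masses on each interval of `L`, then
`err_P(f') ≤ err_P(f*) + ε/2` for every `k`-piece histogram `f*`. -/
theorem stmt8 (n k : ℕ) (hk : 0 < k) (ε : ℝ) (hε : 0 < ε)
    (p : ℕ → ℝ) (hp : ∀ i, 0 ≤ p i) (hsum : ∑ i ∈ Finset.Icc 1 n, p i = 1)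
    (H : Finset ℕ) (hH : H ⊆ Finset.Icc 1 n)
    (L : Finset (ℕ × ℕ))
    (hL : ∀ I ∈ L, 1 ≤ I.1 ∧ I.1 ≤ I.2 ∧ I.2 ≤ n)
    (hLdisj : ∀ I ∈ L, ∀ J ∈ L, I ≠ J → Disjoint (Finset.Icc I.1 I.2) (Finset.Icc J.1 J.2))
    (hHL : ∀ h ∈ H, ∀ I ∈ L, h ∉ Finset.Icc I.1 I.2)
    (hcover : ∀ i ∈ Finset.Icc 1 n, i ∈ H ∨ ∃ I ∈ L, i ∈ Finset.Icc I.1 I.2)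
    (hlight : ∀ I ∈ L, ∑ i ∈ Finset.Icc I.1 I.2, p i < ε / (2 * k))
    (f' : ℕ → ℝ)
    (hf'H : ∀ i ∈ H, f' i = p i)
    (hf'L : ∀ I ∈ L, ∀ i ∈ Finset.Icc I.1 I.2,
      f' i = msMedian ((((Finset.Icc I.1 I.2).filter fun j => p j ≠ 0)).val.map p))
    (fstar : ℕ → ℝ) (hfstar : IsKHistogram n k fstar) :
    errP n p f' ≤ errP n p fstar + ε / 2 := by
  classical
  set D := (Finset.Icc 1 n).filter (fun i => p i ≠ 0) with hD
  set S : ℕ × ℕ → Finset ℕ :=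
    fun I => (Finset.Icc I.1 I.2).filter (fun i => p i ≠ 0) with hSdef
  set med : ℕ × ℕ → ℝ := fun I => msMedian ((S I).val.map p) with hmeddef
  set t : ℕ → ℝ := fun i => |p i - f' i| with ht
  have htnn : ∀ i, 0 ≤ t i := fun i => abs_nonneg _
  have htH : ∀ i ∈ H, t i = 0 := by
    intro i hi; simp [ht, hf'H i hi]
  have hSIcc : ∀ I, S I ⊆ Finset.Icc I.1 I.2 := fun I => Finset.filter_subset _ _
  have hSsub : ∀ I ∈ L, S I ⊆ D := by
    intro I hI i hi
    simp only [hSdef, Finset.mem_filter, Finset.mem_Icc] at hi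
    obtain ⟨h1, h2, h3⟩ := hL I hI
    exact Finset.mem_filter.mpr ⟨Finset.mem_Icc.mpr ⟨by omega, by omega⟩, hi.2⟩
  have hSdisj : (↑L : Set (ℕ × ℕ)).PairwiseDisjoint S := by
    intro I hI J hJ hIJ
    exact Finset.disjoint_filter_filter (hLdisj I hI J hJ hIJ)
  set U := L.biUnion S with hU
  have hUdecomp : ∀ g : ℕ → ℝ, ∑ i ∈ U, g i = ∑ I ∈ L, ∑ i ∈ S I, g i := by
    intro g; exact Finset.sum_biUnion hSdisj
  have hUsubD : U ⊆ D := by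
    intro i hi
    obtain ⟨I, hI, hiI⟩ := Finset.mem_biUnion.mp hi
    exact hSsub I hI hiI
  -- Step E : errP f' ≤ ∑ I ∈ L, E I  where E I = ∑ i ∈ S I, |p i - med I|
  have hDsub : D ⊆ U ∪ H := by
    intro i hi
    obtain ⟨hin, hpn⟩ := Finset.mem_filter.mp hi
    rcases hcover i hin with h | ⟨I, hI, hiI⟩
    · exact Finset.mem_union_right _ h
    · exact Finset.mem_union_left _
        (Finset.mem_biUnion.mpr ⟨I, hI, Finset.mem_filter.mpr ⟨hiI, hpn⟩⟩)
  have stepE : errP n p f' ≤ ∑ I ∈ L, ∑ i ∈ S I, |p i - med I| := by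
    have e0 : errP n p f' = ∑ i ∈ D, t i := rfl
    have e1 : ∑ i ∈ D, t i ≤ ∑ i ∈ U ∪ H, t i :=
      Finset.sum_le_sum_of_subset_of_nonneg hDsub (fun i _ _ => htnn i)
    have e2 : U ∪ H = U ∪ (H \ U) := by
      ext i; simp only [Finset.mem_union, Finset.mem_sdiff]; tauto
    have e3 : ∑ i ∈ U ∪ (H \ U), t i = ∑ i ∈ U, t i + ∑ i ∈ H \ U, t i :=
      Finset.sum_union Finset.disjoint_sdiff
    have e4 : ∑ i ∈ H \ U, t i = 0 :=
      Finset.sum_eq_zero (fun i hi => htH i (Finset.mem_sdiff.mp hi).1)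
    have e5 : ∑ i ∈ U, t i = ∑ I ∈ L, ∑ i ∈ S I, t i := hUdecomp t
    have e6 : ∀ I ∈ L, ∑ i ∈ S I, t i = ∑ i ∈ S I, |p i - med I| := by
      intro I hI
      refine Finset.sum_congr rfl (fun i hi => ?_)
      rw [ht]
      simp only
      rw [hf'L I hI i (hSIcc I hi)]
    rw [e0]
    calc ∑ i ∈ D, t i ≤ ∑ i ∈ U ∪ H, t i := e1
      _ = ∑ i ∈ U, t i := by rw [e2, e3, e4, add_zero]
      _ = ∑ I ∈ L, ∑ i ∈ S I, t i := e5
      _ = ∑ I ∈ L, ∑ i ∈ S I, |p i - med I| := Finset.sum_congr rfl e6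
  -- Step F : ∑ I ∈ L, F I ≤ errP fstar
  have stepF : ∑ I ∈ L, ∑ i ∈ S I, |p i - fstar i| ≤ errP n p fstar := by
    rw [← hUdecomp]
    exact Finset.sum_le_sum_of_subset_of_nonneg hUsubD (fun i _ _ => abs_nonneg _)
  -- breakpoints
  set BP := (Finset.Icc 2 n).filter (fun i => fstar i ≠ fstar (i - 1)) with hBP
  set bad : ℕ × ℕ → Prop := fun I => ∃ j ∈ Finset.Icc (I.1 + 1) I.2, fstar j ≠ fstar (j - 1)
    with hbad
  set B := L.filter bad with hB
  have hBsub : B ⊆ L := Finset.filter_subset _ _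
  -- card bound
  have hcardB : (B.card : ℝ) ≤ (k : ℝ) := by
    set jf : ℕ × ℕ → ℕ := fun I => if h : bad I then h.choose else 0 with hjf
    have hjspec : ∀ I ∈ B, jf I ∈ Finset.Icc (I.1 + 1) I.2 ∧ fstar (jf I) ≠ fstar (jf I - 1) := by
      intro I hI
      have hbI : bad I := (Finset.mem_filter.mp hI).2
      simp only [hjf, dif_pos hbI]
      exact hbI.choose_spec
    have hmaps : ∀ I ∈ B, jf I ∈ BP := by
      intro I hI
      obtain ⟨hmem, hne⟩ := hjspec I hI
      obtain ⟨h1, h2, h3⟩ := hL I (hBsub hI)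
      simp only [Finset.mem_Icc] at hmem
      exact Finset.mem_filter.mpr ⟨Finset.mem_Icc.mpr ⟨by omega, by omega⟩, hne⟩
    have hinj : Set.InjOn jf ↑B := by
      intro I hI J hJ hIJeq
      by_contra hne
      have hI' := hjspec I (by simpa using hI)
      have hJ' := hjspec J (by simpa using hJ)
      have hd := hLdisj I (hBsub (by simpa using hI)) J (hBsub (by simpa using hJ)) hne
      have hIin : jf I ∈ Finset.Icc I.1 I.2 := by
        have := hI'.1; simp only [Finset.mem_Icc] at this ⊢; omega
      have hJin : jf I ∈ Finset.Icc J.1 J.2 := by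
        have := hJ'.1; rw [hIJeq]; simp only [Finset.mem_Icc] at this ⊢; omega
      exact Finset.disjoint_left.mp hd hIin hJin
    have h1 : B.card ≤ BP.card := Finset.card_le_card_of_injOn jf hmaps hinj
    have h2 : BP.card + 1 ≤ k := hfstar
    have : B.card ≤ k := by omega
    exact_mod_cast this
  -- bad intervals: small error
  have hbadE : ∀ I ∈ B, ∑ i ∈ S I, |p i - med I| ≤ ε / (2 * k) := by
    intro I hI
    have hIL : I ∈ L := hBsub hI
    have m1 : ∑ i ∈ S I, |p i - med I| ≤ ∑ i ∈ S I, |p i - 0| :=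
      finset_median_min (S I) p 0
    have m2 : ∑ i ∈ S I, |p i - (0:ℝ)| = ∑ i ∈ S I, p i := by
      refine Finset.sum_congr rfl (fun i _ => ?_)
      rw [sub_zero, abs_of_nonneg (hp i)]
    have m3 : ∑ i ∈ S I, p i ≤ ∑ i ∈ Finset.Icc I.1 I.2, p i :=
      Finset.sum_le_sum_of_subset_of_nonneg (hSIcc I) (fun i _ _ => hp i)
    have m4 := le_of_lt (hlight I hIL)
    linarith
  -- good intervals: median beats constant
  have hgoodE : ∀ I ∈ L.filter (fun I => ¬ bad I),
      ∑ i ∈ S I, |p i - med I| ≤ ∑ i ∈ S I, |p i - fstar i| := by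
    intro I hI
    obtain ⟨hIL, hnbad⟩ := Finset.mem_filter.mp hI
    have hnb : ∀ j ∈ Finset.Icc (I.1 + 1) I.2, fstar j = fstar (j - 1) := by
      intro j hj
      by_contra hc
      exact hnbad ⟨j, hj, hc⟩
    have hconst : ∀ i ∈ Finset.Icc I.1 I.2, fstar i = fstar I.1 := by
      intro i hi
      obtain ⟨h1, h2⟩ := Finset.mem_Icc.mp hi
      exact const_on fstar I.1 I.2 hnb i h1 h2
    have : ∑ i ∈ S I, |p i - fstar i| = ∑ i ∈ S I, |p i - fstar I.1| := by
      refine Finset.sum_congr rfl (fun i hi => ?_)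
      rw [hconst i (hSIcc I hi)]
    rw [this]
    exact finset_median_min (S I) p (fstar I.1)
  -- assemble
  have split : ∑ I ∈ L, ∑ i ∈ S I, |p i - med I|
      = ∑ I ∈ B, ∑ i ∈ S I, |p i - med I|
        + ∑ I ∈ L.filter (fun I => ¬ bad I), ∑ i ∈ S I, |p i - med I| := by
    rw [hB]
    exact (Finset.sum_filter_add_sum_filter_not L bad _).symm
  have hBsum : ∑ I ∈ B, ∑ i ∈ S I, |p i - med I| ≤ ε / 2 := by
    have h1 : ∑ I ∈ B, ∑ i ∈ S I, |p i - med I| ≤ B.card • (ε / (2 * k)) :=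
      Finset.sum_le_card_nsmul B _ _ hbadE
    have h2 : (B.card : ℝ) * (ε / (2 * k)) ≤ (k : ℝ) * (ε / (2 * k)) := by
      apply mul_le_mul_of_nonneg_right hcardB
      positivity
    have h3 : (k : ℝ) * (ε / (2 * k)) = ε / 2 := by
      field_simp
    rw [nsmul_eq_mul] at h1
    linarith
  have hGsum : ∑ I ∈ L.filter (fun I => ¬ bad I), ∑ i ∈ S I, |p i - med I|
      ≤ ∑ I ∈ L, ∑ i ∈ S I, |p i - fstar i| := by
    calc ∑ I ∈ L.filter (fun I => ¬ bad I), ∑ i ∈ S I, |p i - med I|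
        ≤ ∑ I ∈ L.filter (fun I => ¬ bad I), ∑ i ∈ S I, |p i - fstar i| :=
          Finset.sum_le_sum hgoodE
      _ ≤ ∑ I ∈ L, ∑ i ∈ S I, |p i - fstar i| :=
          Finset.sum_le_sum_of_subset_of_nonneg (Finset.filter_subset _ _)
            (fun I _ _ => Finset.sum_nonneg (fun i _ => abs_nonneg _))
  linarith [stepE, stepF]
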